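/- Let K ≥ 3 and d ≥ 1, let ρ : ℝ → [0,∞) satisfy {ρ(u) : u ∈ ℝ} = [0,∞), and let τ : ℝ → ℝ be non-increasing on u < 0, non-decreasing on u > 0, with {τ(u) : u ≤ 0} = {τ(u) : u ≥ 0} = [τ(0), ∞). Define the VSL link P_vsl(y; u) = P_sl(y; τ(ρ[u])) and, for r ∈ [0,1], the mixture model P_maul,r(y; (u, w)) = (1−r)·P_vsl(y; u) + r·P_sl(y; w) over the learner class G_2K of all pairs of functions g_1, g_2 : ℝ^d → ℝ^K. Then {p : ℝ^d → Δ̂_{K-1}^∅} ⊆ R(P_maul,r, G_2K) ⊆ {p : ℝ^d → (Δ̂_{K-1}^{√2·r})^∅}. -/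

import Mathlib

open scoped BigOperators

noncomputable section

/-- The probability simplex Δ_{K-1} ⊆ ℝ^K. -/
def simplex (K : ℕ) : Set (Fin K → ℝ) :=
  {p | (∑ k, p k) = 1 ∧ ∀ k, 0 ≤ p k ∧ p k ≤ 1}

/-- A PMF (vector) is unimodal: there is a mode M such that p is
nondecreasing up to M and nonincreasing after M. -/
def Unimodal {K : ℕ} (p : Fin K → ℝ) : Prop :=
  ∃ M : Fin K, (∀ k, p k ≤ p M) ∧
    (∀ i j : Fin K, i ≤ j → j ≤ M → p i ≤ p j) ∧
    (∀ i j : Fin K, M ≤ i → i ≤ j → p j ≤ p i)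

/-- Δ̂_{K-1}: the set of unimodal PMFs. -/
def uniSimplex (K : ℕ) : Set (Fin K → ℝ) :=
  {p | p ∈ simplex K ∧ Unimodal p}

/-- The stereotype logit (SL) link function. -/
def Psl {K : ℕ} (u : Fin K → ℝ) (y : Fin K) : ℝ :=
  Real.exp (-(u y)) / ∑ k, Real.exp (-(u k))

/-- The ordering transform ρ[u]: (ρ[u])_1 = u_1, (ρ[u])_k = (ρ[u])_{k-1} + ρ(u_k). -/
def ordT (ρ : ℝ → ℝ) {K : ℕ} (u : Fin K → ℝ) : Fin K → ℝ :=
  fun k => u ⟨0, k.pos⟩ +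
    ∑ j ∈ Finset.univ.filter (fun j : Fin K => 0 < (j : ℕ) ∧ (j : ℕ) ≤ (k : ℕ)), ρ (u j)

/-- The Euclidean norm on ℝ^K. -/
def euclNorm {K : ℕ} (u : Fin K → ℝ) : ℝ :=
  Real.sqrt (∑ k, (u k) ^ 2)

/-- Euclidean distance from a point to a set. -/
def DH {K : ℕ} (u : Fin K → ℝ) (S : Set (Fin K → ℝ)) : ℝ :=
  sInf ((fun v => euclNorm (u - v)) '' S)



lemma psl_denom_pos {K : ℕ} (hK : 0 < K) (u : Fin K → ℝ) :
    0 < ∑ k, Real.exp (-(u k)) := by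
  have : Nonempty (Fin K) := ⟨⟨0, hK⟩⟩
  exact Finset.sum_pos (fun k _ => Real.exp_pos _) Finset.univ_nonempty

lemma psl_pos {K : ℕ} (hK : 0 < K) (u : Fin K → ℝ) (y : Fin K) : 0 < Psl u y :=
  div_pos (Real.exp_pos _) (psl_denom_pos hK u)

lemma psl_sum {K : ℕ} (hK : 0 < K) (u : Fin K → ℝ) : ∑ y, Psl u y = 1 := by
  unfold Psl
  rw [← Finset.sum_div, div_self (psl_denom_pos hK u).ne']

lemma psl_le_one {K : ℕ} (hK : 0 < K) (u : Fin K → ℝ) (y : Fin K) : Psl u y ≤ 1 := by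
  have h := psl_sum hK u
  have := Finset.single_le_sum (f := fun y => Psl u y)
    (fun k _ => (psl_pos hK u k).le) (Finset.mem_univ y)
  linarith

lemma psl_le_iff {K : ℕ} (hK : 0 < K) (u : Fin K → ℝ) (i j : Fin K) :
    Psl u i ≤ Psl u j ↔ u j ≤ u i := by
  unfold Psl
  rw [div_le_div_iff_of_pos_right (psl_denom_pos hK u), Real.exp_le_exp, neg_le_neg_iff]

lemma psl_neg_log {K : ℕ} (p : Fin K → ℝ) (hpos : ∀ k, 0 < p k) (hsum : ∑ k, p k = 1)
    (y : Fin K) : Psl (fun k => -Real.log (p k)) y = p y := by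
  unfold Psl
  have h : ∀ k : Fin K, Real.exp (-(-Real.log (p k))) = p k := by
    intro k; rw [neg_neg, Real.exp_log (hpos k)]
  simp only [h]
  rw [hsum, div_one]

lemma psl_shift {K : ℕ} (u : Fin K → ℝ) (c : ℝ) (y : Fin K) :
    Psl (fun k => u k + c) y = Psl u y := by
  unfold Psl
  have h : ∀ k : Fin K, Real.exp (-(u k + c)) = Real.exp (-(u k)) * Real.exp (-c) := by
    intro k; rw [← Real.exp_add]; ring_nf
  simp only [h]
  rw [← Finset.sum_mul, mul_div_mul_right _ _ (Real.exp_ne_zero _)]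

lemma ordT_zero {K : ℕ} (ρ : ℝ → ℝ) (u : Fin K → ℝ) (h : 0 < K) :
    ordT ρ u ⟨0, h⟩ = u ⟨0, h⟩ := by
  unfold ordT
  have : Finset.univ.filter (fun j : Fin K => 0 < (j : ℕ) ∧ (j : ℕ) ≤ ((⟨0,h⟩ : Fin K) : ℕ))
      = ∅ := by
    ext j; simp; omega
  rw [this, Finset.sum_empty, add_zero]

lemma ordT_succ {K : ℕ} (ρ : ℝ → ℝ) (u : Fin K → ℝ) (n : ℕ) (h : n + 1 < K) :
    ordT ρ u ⟨n+1, h⟩ = ordT ρ u ⟨n, by omega⟩ + ρ (u ⟨n+1, h⟩) := by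
  unfold ordT
  have hset : Finset.univ.filter (fun j : Fin K => 0 < (j : ℕ) ∧ (j : ℕ) ≤ n+1)
      = insert (⟨n+1, h⟩ : Fin K)
          (Finset.univ.filter (fun j : Fin K => 0 < (j : ℕ) ∧ (j : ℕ) ≤ n)) := by
    ext j
    simp only [Finset.mem_filter, Finset.mem_insert, Finset.mem_univ, true_and, Fin.ext_iff]
    omega
  rw [hset, Finset.sum_insert (by simp)]
  ring

lemma ordT_monotone {K : ℕ} (ρ : ℝ → ℝ) (u : Fin K → ℝ) (hρ : ∀ z, 0 ≤ ρ z) :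
    Monotone (ordT ρ u) := by
  intro k k' hkk'
  unfold ordT
  apply add_le_add_right
  apply Finset.sum_le_sum_of_subset_of_nonneg
  · intro j hj
    simp only [Finset.mem_filter, Finset.mem_univ, true_and] at hj ⊢
    exact ⟨hj.1, le_trans hj.2 hkk'⟩
  · intro j _ _; exact hρ _

lemma exists_ordT_eq {K : ℕ} (ρ : ℝ → ℝ) (hρ : Set.range ρ = Set.Ici (0:ℝ))
    (v : Fin K → ℝ) (hv : Monotone v) : ∃ u : Fin K → ℝ, ∀ k, ordT ρ u k = v k := by
  classical
  have hchoice : ∀ k : Fin K, (k:ℕ) ≠ 0 →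
      ∃ z, ρ z = v k - v ⟨(k:ℕ)-1, by have := k.isLt; omega⟩ := by
    intro k hk
    have h1 : v ⟨(k:ℕ)-1, by have := k.isLt; omega⟩ ≤ v k := by
      apply hv
      simp only [Fin.le_def]
      omega
    have h2 : v k - v ⟨(k:ℕ)-1, by have := k.isLt; omega⟩ ∈ Set.Ici (0:ℝ) := by
      simp only [Set.mem_Ici]; linarith
    rw [← hρ] at h2
    exact h2
  set u : Fin K → ℝ := fun k =>
    if h : (k:ℕ) = 0 then v k else Classical.choose (hchoice k h) with hu
  have main : ∀ n (h : n < K), ordT ρ u ⟨n, h⟩ = v ⟨n, h⟩ := by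
    intro n
    induction n with
    | zero =>
      intro h
      rw [ordT_zero ρ u]
      simp [hu]
    | succ m ih =>
      intro h
      rw [ordT_succ ρ u m h, ih (by omega)]
      have hne : ((⟨m+1, h⟩ : Fin K) : ℕ) ≠ 0 := by simp
      have hspec := Classical.choose_spec (hchoice ⟨m+1, h⟩ hne)
      have hu1 : u ⟨m+1, h⟩ = Classical.choose (hchoice ⟨m+1, h⟩ hne) := by
        simp [hu]
      rw [hu1, hspec]
      have : (⟨((⟨m+1, h⟩ : Fin K) : ℕ) - 1, by omega⟩ : Fin K) = ⟨m, by omega⟩ := by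
        simp [Fin.ext_iff]
      rw [this]
      ring
  refine ⟨u, fun k => ?_⟩
  have := main (k : ℕ) k.isLt
  simpa using this

def Valley {K : ℕ} (s : Fin K → ℝ) : Prop :=
  ∃ M : Fin K, (∀ k, s M ≤ s k) ∧
    (∀ i j : Fin K, i ≤ j → j ≤ M → s j ≤ s i) ∧
    (∀ i j : Fin K, M ≤ i → i ≤ j → s i ≤ s j)

lemma unimodal_psl_of_valley {K : ℕ} (hK : 0 < K) {s : Fin K → ℝ} (hs : Valley s) :
    Unimodal (Psl s) := by
  obtain ⟨M, h1, h2, h3⟩ := hs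
  exact ⟨M, fun k => (psl_le_iff hK s k M).mpr (h1 k),
    fun i j hij hjM => (psl_le_iff hK s i j).mpr (h2 i j hij hjM),
    fun i j hMi hij => (psl_le_iff hK s j i).mpr (h3 i j hMi hij)⟩

lemma tau_ge {τ : ℝ → ℝ} (hτ3 : τ '' Set.Iic 0 = Set.Ici (τ 0))
    (hτ4 : τ '' Set.Ici 0 = Set.Ici (τ 0)) (z : ℝ) : τ 0 ≤ τ z := by
  rcases le_or_gt z 0 with h | h
  · have : τ z ∈ τ '' Set.Iic 0 := ⟨z, h, rfl⟩
    rw [hτ3] at this; exact this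
  · have : τ z ∈ τ '' Set.Ici 0 := ⟨z, h.le, rfl⟩
    rw [hτ4] at this; exact this

lemma valley_tau {K : ℕ} (hK : 0 < K) (τ : ℝ → ℝ)
    (hτ1 : AntitoneOn τ (Set.Iio 0)) (hτ2 : MonotoneOn τ (Set.Ioi 0))
    (hge : ∀ z, τ 0 ≤ τ z) (v : Fin K → ℝ) (hv : Monotone v) :
    Valley (fun k => τ (v k)) := by
  classical
  by_cases hT : (Finset.univ.filter (fun k : Fin K => v k ≤ 0)).Nonempty
  · set a := (Finset.univ.filter (fun k : Fin K => v k ≤ 0)).max' hT with ha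
    have ha0 : v a ≤ 0 := by
      have := Finset.max'_mem _ hT
      rw [← ha] at this
      simpa using this
    have hgt : ∀ k, a < k → 0 < v k := by
      intro k hk
      by_contra hcon
      push_neg at hcon
      have : k ≤ a := Finset.le_max' _ _ (by simpa using hcon)
      exact absurd hk (not_lt.mpr this)
    have hle : ∀ k, k ≤ a → v k ≤ 0 := fun k hk => le_trans (hv hk) ha0
    have hdec : ∀ i j : Fin K, i ≤ j → j ≤ a → τ (v j) ≤ τ (v i) := by
      intro i j hij hja
      rcases lt_or_eq_of_le (hle j hja) with h | h
      · exact hτ1 (lt_of_le_of_lt (hv hij) h) h (hv hij)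
      · rw [h]; exact hge _
    have hinc : ∀ i j : Fin K, a < i → i ≤ j → τ (v i) ≤ τ (v j) := fun i j hai hij =>
      hτ2 (hgt i hai) (hgt j (lt_of_lt_of_le hai hij)) (hv hij)
    by_cases hlast : ∀ k, k ≤ a
    · refine ⟨a, fun k => hdec k a (hlast k) le_rfl, fun i j hij hja => hdec i j hij hja,
        fun i j hai hij => ?_⟩
      have h1 : i = a := le_antisymm (hlast i) hai
      have h2 : j = a := le_antisymm (hlast j) (le_trans hai hij)
      rw [h1, h2]
    · push_neg at hlast
      obtain ⟨k₀, hk₀⟩ := hlast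
      have hlt : (a : ℕ) + 1 < K := by
        have : (a:ℕ) < (k₀:ℕ) := Fin.lt_def.mp hk₀
        have := k₀.isLt
        omega
      set a' : Fin K := ⟨(a:ℕ)+1, hlt⟩ with ha'
      have haa' : a < a' := by rw [Fin.lt_def]; simp [ha']
      have hsucc : ∀ k : Fin K, a < k → a' ≤ k := by
        intro k hk
        rw [Fin.le_def]
        rw [Fin.lt_def] at hk
        simp [ha']
        omega
      have hmin : ∀ k, min (τ (v a)) (τ (v a')) ≤ τ (v k) := by
        intro k
        rcases le_or_gt k a with h | h
        · exact le_trans (min_le_left _ _) (hdec k a h le_rfl)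
        · exact le_trans (min_le_right _ _) (hinc a' k haa' (hsucc k h))
      rcases le_total (τ (v a)) (τ (v a')) with hcase | hcase
      · refine ⟨a, fun k => by simpa [min_eq_left hcase] using hmin k,
          fun i j hij hja => hdec i j hij hja, fun i j hai hij => ?_⟩
        rcases eq_or_lt_of_le hai with h | h
        · rcases eq_or_lt_of_le (le_trans hai hij) with h2 | h2
          · rw [← h, ← h2]
          · rw [← h]
            exact le_trans hcase (hinc a' j haa' (hsucc j h2))
        · exact hinc i j h hij
      · refine ⟨a', fun k => by simpa [min_eq_right hcase] using hmin k,
          fun i j hij hja' => ?_, fun i j hai hij => hinc i j (lt_of_lt_of_le haa' hai) hij⟩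
        rcases eq_or_lt_of_le hja' with h | h
        · rw [h]
          rcases eq_or_lt_of_le (le_trans hij hja') with h2 | h2
          · rw [h2]
          · have hia : i ≤ a := by
              rw [Fin.le_def]
              rw [Fin.lt_def] at h2
              simp [ha'] at h2
              omega
            exact le_trans hcase (hdec i a hia le_rfl)
        · have hja : j ≤ a := by
            rw [Fin.le_def]
            rw [Fin.lt_def] at h
            simp [ha'] at h
            omega
          exact hdec i j hij hja
  · have hpos : ∀ k, 0 < v k := by
      intro k
      by_contra h
      push_neg at h
      exact hT ⟨k, by simpa using h⟩
    refine ⟨⟨0, hK⟩, fun k => hτ2 (hpos _) (hpos _) (hv (by simp [Fin.le_def])),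
      fun i j hij hj0 => ?_, fun i j _ hij => hτ2 (hpos _) (hpos _) (hv hij)⟩
    have : i = j := le_antisymm hij (le_trans hj0 (by simp [Fin.le_def]))
    rw [this]

lemma exists_monotone_tau_preimage {K : ℕ} (τ : ℝ → ℝ)
    (hτ1 : AntitoneOn τ (Set.Iio 0)) (hτ2 : MonotoneOn τ (Set.Ioi 0))
    (hτ3 : τ '' Set.Iic 0 = Set.Ici (τ 0))
    (hτ4 : τ '' Set.Ici 0 = Set.Ici (τ 0))
    (t : Fin K → ℝ) (M : Fin K)
    (htM : t M = τ 0) (hge : ∀ k, τ 0 ≤ t k)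
    (hdec : ∀ i j : Fin K, i ≤ j → j ≤ M → t j ≤ t i)
    (hinc : ∀ i j : Fin K, M ≤ i → i ≤ j → t i ≤ t j) :
    ∃ v : Fin K → ℝ, Monotone v ∧ ∀ k, τ (v k) = t k := by
  classical
  have hLex : ∀ k : Fin K, ∃ z, z ≤ 0 ∧ τ z = t k := by
    intro k
    have : t k ∈ τ '' Set.Iic 0 := by rw [hτ3]; exact hge k
    obtain ⟨z, hz1, hz2⟩ := this
    exact ⟨z, hz1, hz2⟩
  have hRex : ∀ k : Fin K, ∃ z, 0 ≤ z ∧ τ z = t k := by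
    intro k
    have : t k ∈ τ '' Set.Ici 0 := by rw [hτ4]; exact hge k
    obtain ⟨z, hz1, hz2⟩ := this
    exact ⟨z, hz1, hz2⟩
  set a : Fin K → ℝ := fun k =>
    if k = M then 0 else if k ≤ M then (hLex k).choose else (hRex k).choose with ha
  have haM : a M = 0 := by simp [ha]
  have haL : ∀ k, k ≤ M → a k ≤ 0 ∧ τ (a k) = t k := by
    intro k hk
    by_cases h : k = M
    · subst h; rw [haM]; exact ⟨le_rfl, htM.symm⟩
    · simp only [ha, if_neg h, if_pos hk]
      exact ⟨(hLex k).choose_spec.1, (hLex k).choose_spec.2⟩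
  have haR : ∀ k, M ≤ k → 0 ≤ a k ∧ τ (a k) = t k := by
    intro k hk
    by_cases h : k = M
    · subst h; rw [haM]; exact ⟨le_rfl, htM.symm⟩
    · have hnk : ¬ k ≤ M := fun hc => h (le_antisymm hc hk)
      simp only [ha, if_neg h, if_neg hnk]
      exact ⟨(hRex k).choose_spec.1, (hRex k).choose_spec.2⟩
  set v : Fin K → ℝ := fun k =>
    if hk : k ≤ M then (Finset.Icc k M).inf' ⟨M, by simp [Finset.mem_Icc, hk]⟩ a
    else (Finset.Icc M k).sup' ⟨M, by simp [Finset.mem_Icc, le_of_lt (lt_of_not_ge hk)]⟩ a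
    with hvdef
  have hvL : ∀ k (hk : k ≤ M),
      v k = (Finset.Icc k M).inf' ⟨M, by simp [Finset.mem_Icc, hk]⟩ a := by
    intro k hk; simp only [hvdef, dif_pos hk]
  have hvR : ∀ k (hk : ¬ k ≤ M),
      v k = (Finset.Icc M k).sup' ⟨M, by simp [Finset.mem_Icc, le_of_lt (lt_of_not_ge hk)]⟩ a := by
    intro k hk; simp only [hvdef, dif_neg hk]
  have hvLle : ∀ k, k ≤ M → v k ≤ 0 := by
    intro k hk
    rw [hvL k hk, ← haM]
    exact Finset.inf'_le a (by simp [Finset.mem_Icc, hk])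
  have hvRge : ∀ k, ¬ k ≤ M → 0 ≤ v k := by
    intro k hk
    rw [hvR k hk, ← haM]
    exact Finset.le_sup' a (by simp [Finset.mem_Icc, le_of_lt (lt_of_not_ge hk)])
  refine ⟨v, ?_, ?_⟩
  · intro k k' hkk'
    by_cases hk : k ≤ M
    · by_cases hk' : k' ≤ M
      · rw [hvL k hk, hvL k' hk']
        apply Finset.le_inf'
        intro j hj
        rw [Finset.mem_Icc] at hj
        exact Finset.inf'_le a (by rw [Finset.mem_Icc]; exact ⟨le_trans hkk' hj.1, hj.2⟩)
      · exact le_trans (hvLle k hk) (hvRge k' hk')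
    · have hnk' : ¬ k' ≤ M := fun hc => hk (le_trans hkk' hc)
      rw [hvR k hk, hvR k' hnk']
      apply Finset.sup'_le
      intro j hj
      rw [Finset.mem_Icc] at hj
      exact Finset.le_sup' a (by rw [Finset.mem_Icc]; exact ⟨hj.1, le_trans hj.2 hkk'⟩)
  · intro k
    by_cases hk : k ≤ M
    · obtain ⟨j, hjmem, hjeq⟩ :=
        Finset.exists_mem_eq_inf' (⟨M, by simp [Finset.mem_Icc, hk]⟩ :
          (Finset.Icc k M).Nonempty) a
      rw [Finset.mem_Icc] at hjmem
      have hvk : v k = a j := by rw [hvL k hk]; exact hjeq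
      have hajk : a j ≤ a k := by
        rw [← hjeq]
        exact Finset.inf'_le a (by simp [Finset.mem_Icc, hk])
      have htjk : t j ≤ t k := hdec k j hjmem.1 hjmem.2
      have hktj : t k ≤ t j := by
        rcases eq_or_lt_of_le hajk with h | h
        · rw [← (haL j hjmem.2).2, ← (haL k hk).2, h]
        · have hak0 : a k ≤ 0 := (haL k hk).1
          rcases eq_or_lt_of_le hak0 with h0 | h0
          · rw [← (haL k hk).2, h0]
            exact hge j
          · rw [← (haL j hjmem.2).2, ← (haL k hk).2]
            exact hτ1 (lt_trans h h0) h0 hajk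
      rw [hvk, (haL j hjmem.2).2]
      exact le_antisymm htjk hktj
    · have hMk : M ≤ k := le_of_lt (lt_of_not_ge hk)
      obtain ⟨j, hjmem, hjeq⟩ :=
        Finset.exists_mem_eq_sup' (⟨M, by simp [Finset.mem_Icc, hMk]⟩ :
          (Finset.Icc M k).Nonempty) a
      rw [Finset.mem_Icc] at hjmem
      have hvk : v k = a j := by rw [hvR k hk]; exact hjeq
      have hajk : a k ≤ a j := by
        rw [← hjeq]
        exact Finset.le_sup' a (by simp [Finset.mem_Icc, hMk])
      have htjk : t j ≤ t k := hinc j k hjmem.1 hjmem.2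
      have hktj : t k ≤ t j := by
        rcases eq_or_lt_of_le hajk with h | h
        · rw [← (haR j hjmem.1).2, ← (haR k hMk).2, h]
        · have hak0 : 0 ≤ a k := (haR k hMk).1
          rcases eq_or_lt_of_le hak0 with h0 | h0
          · rw [← (haR k hMk).2, ← h0]
            exact hge j
          · rw [← (haR j hjmem.1).2, ← (haR k hMk).2]
            exact hτ2 h0 (lt_trans h0 h) hajk
      rw [hvk, (haR j hjmem.1).2]
      exact le_antisymm htjk hktj

lemma exists_vsl_rep {K : ℕ} (hK : 0 < K) (ρ : ℝ → ℝ)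
    (hρ : Set.range ρ = Set.Ici (0 : ℝ)) (τ : ℝ → ℝ)
    (hτ1 : AntitoneOn τ (Set.Iio 0)) (hτ2 : MonotoneOn τ (Set.Ioi 0))
    (hτ3 : τ '' Set.Iic 0 = Set.Ici (τ 0))
    (hτ4 : τ '' Set.Ici 0 = Set.Ici (τ 0))
    (p : Fin K → ℝ) (hsum : ∑ k, p k = 1) (hpos : ∀ k, 0 < p k) (huni : Unimodal p) :
    ∃ u : Fin K → ℝ, ∀ y, Psl (fun k => τ (ordT ρ u k)) y = p y := by
  obtain ⟨M, hM1, hM2, hM3⟩ := huni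
  set w : Fin K → ℝ := fun k => -Real.log (p k) with hw
  have hwmono : ∀ i j : Fin K, p i ≤ p j → w j ≤ w i := by
    intro i j hij
    simp only [hw, neg_le_neg_iff]
    exact Real.log_le_log (hpos i) hij
  set t : Fin K → ℝ := fun k => w k - w M + τ 0 with ht
  have htM : t M = τ 0 := by simp [ht]
  have hge : ∀ k, τ 0 ≤ t k := by
    intro k
    have := hwmono k M (hM1 k)
    simp only [ht]
    linarith
  have hdec : ∀ i j : Fin K, i ≤ j → j ≤ M → t j ≤ t i := by
    intro i j hij hjM
    have := hwmono i j (hM2 i j hij hjM)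
    simp only [ht]
    linarith
  have hinc : ∀ i j : Fin K, M ≤ i → i ≤ j → t i ≤ t j := by
    intro i j hMi hij
    have := hwmono j i (hM3 i j hMi hij)
    simp only [ht]
    linarith
  obtain ⟨v, hvmono, hvτ⟩ :=
    exists_monotone_tau_preimage τ hτ1 hτ2 hτ3 hτ4 t M htM hge hdec hinc
  obtain ⟨u, hu⟩ := exists_ordT_eq ρ hρ v hvmono
  refine ⟨u, fun y => ?_⟩
  have hfun : (fun k => τ (ordT ρ u k)) = fun k => w k + (τ 0 - w M) := by
    funext k
    rw [hu k, hvτ k]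
    simp only [ht]
    ring
  rw [hfun, psl_shift, psl_neg_log p hpos hsum]


/-- Corollary: for the mixture of the VSL model and the SL
model, the representation ability is sandwiched between the unimodal
positive maps and the (√2·r)-approximately unimodal positive maps. -/
theorem stmt11 (K d : ℕ) (hK : 3 ≤ K) (hd : 1 ≤ d)
    (ρ : ℝ → ℝ) (hρ : Set.range ρ = Set.Ici (0 : ℝ))
    (τ : ℝ → ℝ)
    (hτ1 : AntitoneOn τ (Set.Iio 0)) (hτ2 : MonotoneOn τ (Set.Ioi 0))
    (hτ3 : τ '' Set.Iic 0 = Set.Ici (τ 0))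
    (hτ4 : τ '' Set.Ici 0 = Set.Ici (τ 0))
    (r : ℝ) (hr0 : 0 ≤ r) (hr1 : r ≤ 1) :
    ({p : (Fin d → ℝ) → Fin K → ℝ | ∀ x, p x ∈ uniSimplex K ∧ ∀ k, p x k ≠ 0}
      ⊆ {P : (Fin d → ℝ) → Fin K → ℝ |
          ∃ g1 g2 : (Fin d → ℝ) → Fin K → ℝ,
            ∀ x y, P x y
              = (1 - r) * Psl (fun k => τ (ordT ρ (g1 x) k)) y + r * Psl (g2 x) y})
    ∧ ({P : (Fin d → ℝ) → Fin K → ℝ |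
          ∃ g1 g2 : (Fin d → ℝ) → Fin K → ℝ,
            ∀ x y, P x y
              = (1 - r) * Psl (fun k => τ (ordT ρ (g1 x) k)) y + r * Psl (g2 x) y}
      ⊆ {p : (Fin d → ℝ) → Fin K → ℝ |
          ∀ x, p x ∈ simplex K ∧ DH (p x) (uniSimplex K) ≤ Real.sqrt 2 * r ∧
            ∀ k, p x k ≠ 0}) := by

  have hK0 : 0 < K := by omega
  constructor
  · -- first inclusion
    intro p hp
    simp only [Set.mem_setOf_eq] at hp ⊢
    have hx : ∀ x, ∃ u : Fin K → ℝ, ∀ y, Psl (fun k => τ (ordT ρ u k)) y = p x y := by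
      intro x
      obtain ⟨⟨⟨hsum, hbd⟩, huni⟩, hne⟩ := hp x
      exact exists_vsl_rep hK0 ρ hρ τ hτ1 hτ2 hτ3 hτ4 (p x) hsum
        (fun k => lt_of_le_of_ne (hbd k).1 (Ne.symm (hne k))) huni
    choose g1 hg1 using hx
    refine ⟨g1, fun x k => -Real.log (p x k), fun x y => ?_⟩
    obtain ⟨⟨⟨hsum, hbd⟩, huni⟩, hne⟩ := hp x
    rw [hg1 x y, psl_neg_log (p x)
      (fun k => lt_of_le_of_ne (hbd k).1 (Ne.symm (hne k))) hsum]
    ring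
  · -- second inclusion
    intro P hP
    simp only [Set.mem_setOf_eq] at hP ⊢
    obtain ⟨g1, g2, h⟩ := hP
    intro x
    set s : Fin K → ℝ := fun k => τ (ordT ρ (g1 x) k) with hs
    have hρnn : ∀ z, 0 ≤ ρ z := by
      intro z
      have : ρ z ∈ Set.range ρ := ⟨z, rfl⟩
      rw [hρ] at this
      exact this
    have hq : Psl s ∈ uniSimplex K := by
      refine ⟨⟨psl_sum hK0 s, fun k => ⟨(psl_pos hK0 s k).le, psl_le_one hK0 s k⟩⟩, ?_⟩
      exact unimodal_psl_of_valley hK0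
        (valley_tau hK0 τ hτ1 hτ2 (tau_ge hτ3 hτ4) _ (ordT_monotone ρ (g1 x) hρnn))
    have hPsum : ∑ y, P x y = 1 := by
      have : ∀ y, P x y = (1 - r) * Psl s y + r * Psl (g2 x) y := fun y => h x y
      rw [Finset.sum_congr rfl (fun y _ => this y), Finset.sum_add_distrib,
        ← Finset.mul_sum, ← Finset.mul_sum, psl_sum hK0, psl_sum hK0]
      ring
    have hPpos : ∀ y, 0 < P x y := by
      intro y
      rw [h x y]
      have h1 := psl_pos hK0 s y
      have h2 := psl_pos hK0 (g2 x) y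
      have hm : 0 < min (Psl s y) (Psl (g2 x) y) := lt_min h1 h2
      have hA : (1 - r) * min (Psl s y) (Psl (g2 x) y) ≤ (1 - r) * Psl s y :=
        mul_le_mul_of_nonneg_left (min_le_left _ _) (by linarith)
      have hB : r * min (Psl s y) (Psl (g2 x) y) ≤ r * Psl (g2 x) y :=
        mul_le_mul_of_nonneg_left (min_le_right _ _) hr0
      nlinarith
    have hPle : ∀ y, P x y ≤ 1 := by
      intro y
      have := Finset.single_le_sum (f := fun y => P x y)
        (fun k _ => (hPpos k).le) (Finset.mem_univ y)
      linarith [hPsum]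
    refine ⟨⟨hPsum, fun k => ⟨(hPpos k).le, hPle k⟩⟩, ?_, fun k => (hPpos k).ne'⟩
    -- DH bound
    have hbdd : BddBelow ((fun v => euclNorm (P x - v)) '' uniSimplex K) := by
      refine ⟨0, ?_⟩
      rintro z ⟨q, _, rfl⟩
      exact Real.sqrt_nonneg _
    have hmem : euclNorm (P x - Psl s) ∈ (fun v => euclNorm (P x - v)) '' uniSimplex K :=
      ⟨Psl s, hq, rfl⟩
    refine le_trans (csInf_le hbdd hmem) ?_
    -- euclNorm (P x - Psl s) ≤ √2 * r
    have hdiff : ∀ k, (P x - Psl s) k = r * (Psl (g2 x) k - Psl s k) := by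
      intro k
      simp only [Pi.sub_apply]
      rw [h x k]
      ring
    have hsum2 : ∑ k, (Psl (g2 x) k - Psl s k) ^ 2 ≤ 2 := by
      have hterm : ∀ k : Fin K, (Psl (g2 x) k - Psl s k) ^ 2 ≤ Psl (g2 x) k + Psl s k := by
        intro k
        have h1 := psl_pos hK0 (g2 x) k
        have h2 := psl_le_one hK0 (g2 x) k
        have h3 := psl_pos hK0 s k
        have h4 := psl_le_one hK0 s k
        nlinarith
      calc ∑ k, (Psl (g2 x) k - Psl s k) ^ 2
          ≤ ∑ k, (Psl (g2 x) k + Psl s k) := Finset.sum_le_sum (fun k _ => hterm k)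
        _ = 2 := by
            rw [Finset.sum_add_distrib, psl_sum hK0, psl_sum hK0]; norm_num
    unfold euclNorm
    have hcalc : ∑ k, ((P x - Psl s) k) ^ 2 = r ^ 2 * ∑ k, (Psl (g2 x) k - Psl s k) ^ 2 := by
      rw [Finset.mul_sum]
      apply Finset.sum_congr rfl
      intro k _
      rw [hdiff k]
      ring
    rw [hcalc]
    have h2r : r ^ 2 * ∑ k, (Psl (g2 x) k - Psl s k) ^ 2 ≤ 2 * r ^ 2 := by
      have := mul_le_mul_of_nonneg_left hsum2 (sq_nonneg r)
      linarith
    refine le_trans (Real.sqrt_le_sqrt h2r) ?_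
    rw [Real.sqrt_mul (by norm_num : (0:ℝ) ≤ 2), Real.sqrt_sq hr0]
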